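/- Fix σ_a, σ_w > 0 and r₀ > 0, and let T := τ(r₀) where τ(x) = σ_a²(F(x)−F(0))/(σ_w² G(x)), F(x) = 4·arctan(√(1+2x)) − √(1+2x)(3+4x)/(1+x)², G(x) = x²(1+2x)^{3/2}/(1+x)². Define r(t) := F⁻¹(F(r₀) − (σ_w²/σ_a²)·G(r₀)·t) and Σ₁(t) := σ_a²·G(r(t))/G(r₀) for t ∈ [0,T]. Then r and Σ₁ are C¹ on [0,T], satisfy r(0) = r₀, Σ₁(0) = σ_a², r(T) = 0, Σ₁(T) = 0, r(t) > 0 and Σ₁(t) > 0 for t ∈ [0,T), and on [0,T) they solve the coupled ODEs r'(t) = −σ_w²·r(t)²·(1+r(t))·(1+2r(t)) / ((1+3r(t))·Σ₁(t)) and Σ₁'(t) = −σ_w²·(r(t)² + 2r(t)). -/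

import Mathlib

open Real Set

noncomputable def F (x : ℝ) : ℝ :=
  4 * Real.arctan (Real.sqrt (1 + 2 * x)) -
    Real.sqrt (1 + 2 * x) * (3 + 4 * x) / (1 + x) ^ 2

noncomputable def G (x : ℝ) : ℝ := x ^ 2 * (1 + 2 * x) ^ ((3 : ℝ) / 2) / (1 + x) ^ 2

noncomputable def tau (σa σw x : ℝ) : ℝ := σa ^ 2 * (F x - F 0) / (σw ^ 2 * G x)

open Filter Topology

noncomputable def Fd (x : ℝ) : ℝ := Real.sqrt (1 + 2 * x) * (1 + 3 * x) / (1 + x) ^ 3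

noncomputable def Gd (x : ℝ) : ℝ :=
  x * Real.sqrt (1 + 2 * x) * (1 + 3 * x) * (x + 2) / (1 + x) ^ 3

lemma hasDerivAt_F {x : ℝ} (hx : 0 ≤ x) : HasDerivAt F (Fd x) x := by
  have h2x : (0:ℝ) < 1 + 2 * x := by linarith
  have hs : Real.sqrt (1 + 2 * x) ≠ 0 := (Real.sqrt_pos.mpr h2x).ne'
  have hxx : (1 + x) ≠ 0 := by positivity
  have hlin : HasDerivAt (fun x : ℝ => 1 + 2 * x) 2 x := by
    simpa using ((hasDerivAt_id x).const_mul (2:ℝ)).const_add 1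
  have hsq : HasDerivAt (fun x : ℝ => Real.sqrt (1 + 2 * x))
      (2 / (2 * Real.sqrt (1 + 2 * x))) x := hlin.sqrt h2x.ne'
  have harct : HasDerivAt (fun x : ℝ => Real.arctan (Real.sqrt (1 + 2 * x)))
      (1 / (1 + Real.sqrt (1 + 2 * x) ^ 2) * (2 / (2 * Real.sqrt (1 + 2 * x)))) x :=
    (Real.hasDerivAt_arctan _).comp x hsq
  have hnum : HasDerivAt (fun x : ℝ => Real.sqrt (1 + 2 * x) * (3 + 4 * x))
      (2 / (2 * Real.sqrt (1 + 2 * x)) * (3 + 4 * x) + Real.sqrt (1 + 2 * x) * 4) x := by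
    have h4 : HasDerivAt (fun x : ℝ => 3 + 4 * x) 4 x := by
      simpa using ((hasDerivAt_id x).const_mul (4:ℝ)).const_add 3
    exact hsq.mul h4
  have hden : HasDerivAt (fun x : ℝ => (1 + x) ^ 2) (2 * (1 + x)) x := by
    have h1 : HasDerivAt (fun x : ℝ => 1 + x) 1 x := by
      simpa using (hasDerivAt_id x).const_add (1:ℝ)
    simpa using h1.fun_pow 2
  have hfrac := hnum.div hden (by positivity)
  have := (harct.const_mul (4:ℝ)).sub hfrac
  refine this.congr_deriv (Eq.symm ?_)
  have hss : Real.sqrt (1 + 2 * x) ^ 2 = 1 + 2 * x := Real.sq_sqrt h2x.le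
  rw [Fd]
  set u := Real.sqrt (1 + 2 * x) with hu
  have hxval : x = (u ^ 2 - 1) / 2 := by rw [hss]; ring
  rw [hxval]
  have hu0 : u ≠ 0 := hs
  have hu1 : 1 + (u ^ 2 - 1) / 2 ≠ 0 := by nlinarith [sq_nonneg u, hss, hx]
  have h1u : (1:ℝ) + u ^ 2 ≠ 0 := by positivity
  have hrw : 1 + (u ^ 2 - 1) / 2 = (1 + u ^ 2) / 2 := by ring
  rw [hrw]
  field_simp [hu0, h1u]
  ring

lemma rpow_32 {x : ℝ} (h2x : (0:ℝ) < 1 + 2 * x) :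
    (1 + 2 * x) ^ ((3:ℝ)/2) = (1 + 2 * x) * Real.sqrt (1 + 2 * x) := by
  rw [show ((3:ℝ)/2) = 1 + 1/2 by norm_num, Real.rpow_add h2x, Real.rpow_one,
    Real.sqrt_eq_rpow]

lemma hasDerivAt_G {x : ℝ} (hx : 0 ≤ x) : HasDerivAt G (Gd x) x := by
  have h2x : (0:ℝ) < 1 + 2 * x := by linarith
  have hs : Real.sqrt (1 + 2 * x) ≠ 0 := (Real.sqrt_pos.mpr h2x).ne'
  have hlin : HasDerivAt (fun x : ℝ => 1 + 2 * x) 2 x := by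
    simpa using ((hasDerivAt_id x).const_mul (2:ℝ)).const_add 1
  have hpow : HasDerivAt (fun x : ℝ => (1 + 2 * x) ^ ((3:ℝ)/2))
      (2 * ((3:ℝ)/2) * (1 + 2 * x) ^ ((3:ℝ)/2 - 1)) x :=
    hlin.rpow_const (Or.inr (by norm_num))
  have hx2 : HasDerivAt (fun x : ℝ => x ^ 2) (2 * x) x := by simpa using hasDerivAt_pow 2 x
  have hnum := hx2.mul hpow
  have hden : HasDerivAt (fun x : ℝ => (1 + x) ^ 2) (2 * (1 + x)) x := by
    have h1 : HasDerivAt (fun x : ℝ => 1 + x) 1 x := by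
      simpa using (hasDerivAt_id x).const_add (1:ℝ)
    simpa using h1.fun_pow 2
  have hfrac := hnum.div hden (by positivity)
  refine hfrac.congr_deriv (Eq.symm ?_)
  have hss : Real.sqrt (1 + 2 * x) ^ 2 = 1 + 2 * x := Real.sq_sqrt h2x.le
  have h12 : (1 + 2 * x) ^ ((3:ℝ)/2 - 1) = Real.sqrt (1 + 2 * x) := by
    rw [show ((3:ℝ)/2 - 1) = 1/2 by norm_num, Real.sqrt_eq_rpow]
  rw [Gd, Pi.mul_apply, rpow_32 h2x, h12]
  set u := Real.sqrt (1 + 2 * x) with hu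
  have hxval : x = (u ^ 2 - 1) / 2 := by rw [hss]; ring
  rw [hxval]
  have hu0 : u ≠ 0 := hs
  have h1u : (1:ℝ) + u ^ 2 ≠ 0 := by positivity
  have hrw : 1 + (u ^ 2 - 1) / 2 = (1 + u ^ 2) / 2 := by ring
  rw [hrw]
  field_simp [hu0, h1u]
  ring

lemma Fd_pos {x : ℝ} (hx : 0 ≤ x) : 0 < Fd x := by
  have h2x : (0:ℝ) < 1 + 2 * x := by linarith
  have := Real.sqrt_pos.mpr h2x
  rw [Fd]; positivity

lemma F_contAt {x : ℝ} (hx : 0 ≤ x) : ContinuousAt F x := (hasDerivAt_F hx).continuousAt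

lemma F_mono : StrictMonoOn F (Ici 0) := by
  apply strictMonoOn_of_deriv_pos (convex_Ici 0)
  · exact fun x hx => (F_contAt hx).continuousWithinAt
  · intro x hx
    rw [interior_Ici] at hx
    rw [(hasDerivAt_F (le_of_lt hx)).deriv]
    exact Fd_pos (le_of_lt hx)

lemma F_zero : F 0 = Real.pi - 3 := by
  have : Real.sqrt (1 + 2 * 0) = 1 := by norm_num
  rw [F, this]
  rw [Real.arctan_one]
  norm_num
  ring

lemma F_lt_two_pi {x : ℝ} (hx : 0 ≤ x) : F x < 2 * Real.pi := by
  have h2x : (0:ℝ) < 1 + 2 * x := by linarith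
  have h1 : Real.arctan (Real.sqrt (1 + 2 * x)) < Real.pi / 2 := Real.arctan_lt_pi_div_two _
  have h2 : 0 < Real.sqrt (1 + 2 * x) * (3 + 4 * x) / (1 + x) ^ 2 := by
    have := Real.sqrt_pos.mpr h2x
    positivity
  rw [F]; nlinarith

lemma G_pos {x : ℝ} (hx : 0 < x) : 0 < G x := by
  have h2x : (0:ℝ) < 1 + 2 * x := by linarith
  have := Real.rpow_pos_of_pos h2x ((3:ℝ)/2)
  rw [G]; positivity

lemma G_zero : G 0 = 0 := by simp [G]

lemma hasDerivWithinAt_of_leftInv {f g : ℝ → ℝ} {s : Set ℝ} {y d : ℝ} (hy : y ∈ s)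
    (hfg : ∀ z ∈ s, f (g z) = z) (hg : ContinuousWithinAt g s y)
    (hf : HasDerivAt f d (g y)) (hd : d ≠ 0) : HasDerivWithinAt g d⁻¹ s y := by
  rw [hasDerivWithinAt_iff_tendsto_slope]
  have hne : ∀ z ∈ s \ {y}, g z ≠ g y := by
    intro z hz hgz
    exact hz.2 (mem_singleton_iff.mpr (by rw [← hfg z hz.1, hgz, hfg y hy]))
  have h1 : Tendsto g (𝓝[s \ {y}] y) (𝓝[≠] (g y)) := by
    rw [tendsto_nhdsWithin_iff]
    constructor
    · exact (hg.mono diff_subset).tendsto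
    · filter_upwards [self_mem_nhdsWithin] with z hz
      exact hne z hz
  have h2 : Tendsto (slope f (g y)) (𝓝[≠] (g y)) (𝓝 d) := hasDerivAt_iff_tendsto_slope.mp hf
  have h3 : Tendsto (fun z => (slope f (g y) (g z))⁻¹) (𝓝[s \ {y}] y) (𝓝 d⁻¹) :=
    (h2.comp h1).inv₀ hd
  refine h3.congr' ?_
  filter_upwards [self_mem_nhdsWithin] with z hz
  rw [slope_def_field, slope_def_field, hfg z hz.1, hfg y hy, inv_div]

lemma alg1 {ρ σa σw g s1 : ℝ} (hρ : 0 < ρ) (hσa : 0 < σa) (hg : 0 < g)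
    (hs1 : s1 = σa ^ 2 * G ρ / g) :
    (Fd ρ)⁻¹ * -(σw ^ 2 / σa ^ 2 * g) =
      -(σw ^ 2 * ρ ^ 2 * (1 + ρ) * (1 + 2 * ρ) / ((1 + 3 * ρ) * s1)) := by
  have h2ρ : (0:ℝ) < 1 + 2 * ρ := by linarith
  have hsρ : 0 < Real.sqrt (1 + 2 * ρ) := Real.sqrt_pos.mpr h2ρ
  have hss : Real.sqrt (1 + 2 * ρ) ^ 2 = 1 + 2 * ρ := Real.sq_sqrt h2ρ.le
  rw [hs1, G, Fd, rpow_32 h2ρ]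
  set u := Real.sqrt (1 + 2 * ρ) with hu
  have hρval : ρ = (u ^ 2 - 1) / 2 := by rw [hss]; ring
  rw [hρval]
  have hu0 : u ≠ 0 := hsρ.ne'
  have hu1 : (1:ℝ) < u := by nlinarith
  have e1 : 1 + (u ^ 2 - 1) / 2 = (1 + u ^ 2) / 2 := by ring
  have e2 : 1 + 3 * ((u ^ 2 - 1) / 2) = (3 * u ^ 2 - 1) / 2 := by ring
  have e3 : 1 + 2 * ((u ^ 2 - 1) / 2) = u ^ 2 := by ring
  rw [e1, e2, e3]
  have h1u : (1:ℝ) + u ^ 2 ≠ 0 := by positivity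
  have h3u : 3 * u ^ 2 - 1 ≠ 0 := by nlinarith
  have hq : u ^ 2 - 1 ≠ 0 := by nlinarith
  field_simp

lemma alg2 {ρ σa σw g : ℝ} (hρ : 0 < ρ) (hσa : 0 < σa) (hg : 0 < g) :
    σa ^ 2 * Gd ρ / g * ((Fd ρ)⁻¹ * -(σw ^ 2 / σa ^ 2 * g)) =
      -(σw ^ 2 * (ρ ^ 2 + 2 * ρ)) := by
  have h2ρ : (0:ℝ) < 1 + 2 * ρ := by linarith
  have hsρ : 0 < Real.sqrt (1 + 2 * ρ) := Real.sqrt_pos.mpr h2ρ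
  have hss : Real.sqrt (1 + 2 * ρ) ^ 2 = 1 + 2 * ρ := Real.sq_sqrt h2ρ.le
  rw [Gd, Fd]
  set u := Real.sqrt (1 + 2 * ρ) with hu
  have hρval : ρ = (u ^ 2 - 1) / 2 := by rw [hss]; ring
  rw [hρval]
  have hu0 : u ≠ 0 := hsρ.ne'
  have hu1 : (1:ℝ) < u := by nlinarith
  have e1 : 1 + (u ^ 2 - 1) / 2 = (1 + u ^ 2) / 2 := by ring
  have e2 : 1 + 3 * ((u ^ 2 - 1) / 2) = (3 * u ^ 2 - 1) / 2 := by ring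
  have e3 : 1 + 2 * ((u ^ 2 - 1) / 2) = u ^ 2 := by ring
  rw [e1, e2]
  have h1u : (1:ℝ) + u ^ 2 ≠ 0 := by positivity
  have h3u : 3 * u ^ 2 - 1 ≠ 0 := by nlinarith
  have h3u' : u ^ 2 * 3 - 1 ≠ 0 := by nlinarith
  field_simp

theorem stmt_4 (σa σw r₀ : ℝ) (hσa : 0 < σa) (hσw : 0 < σw) (hr₀ : 0 < r₀)
    (T : ℝ) (hT : T = tau σa σw r₀)
    (Finv : ℝ → ℝ)
    (hFinv_left : ∀ x ∈ Set.Ici (0 : ℝ), Finv (F x) = x)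
    (hFinv_right : ∀ y ∈ Set.Ico (Real.pi - 3) (2 * Real.pi), F (Finv y) = y)
    (r S1 : ℝ → ℝ)
    (hr : ∀ t, r t = Finv (F r₀ - σw ^ 2 / σa ^ 2 * G r₀ * t))
    (hS1 : ∀ t, S1 t = σa ^ 2 * G (r t) / G r₀) :
    ContDiffOn ℝ 1 r (Set.Icc 0 T) ∧ ContDiffOn ℝ 1 S1 (Set.Icc 0 T) ∧
      r 0 = r₀ ∧ S1 0 = σa ^ 2 ∧ r T = 0 ∧ S1 T = 0 ∧
      (∀ t ∈ Set.Ico 0 T, 0 < r t ∧ 0 < S1 t) ∧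
      (∀ t ∈ Set.Ico 0 T,
        HasDerivAt r
          (-(σw ^ 2 * r t ^ 2 * (1 + r t) * (1 + 2 * r t) / ((1 + 3 * r t) * S1 t))) t ∧
        HasDerivAt S1 (-(σw ^ 2 * (r t ^ 2 + 2 * r t))) t) := by
  have hσa2 : (0:ℝ) < σa ^ 2 := by positivity
  have hGr₀ : 0 < G r₀ := G_pos hr₀
  set c := σw ^ 2 / σa ^ 2 * G r₀ with hc_def
  have hc : 0 < c := by positivity
  have hF0r : F 0 < F r₀ := F_mono (Set.mem_Ici.mpr le_rfl) (Set.mem_Ici.mpr hr₀.le) hr₀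
  have hcT : c * T = F r₀ - F 0 := by
    rw [hT, tau, hc_def]; field_simp
  have hT_pos : 0 < T := by
    have h0 : 0 < c * T := by rw [hcT]; linarith
    rcases mul_pos_iff.mp h0 with ⟨_, h⟩ | ⟨h, _⟩
    · exact h
    · linarith
  set R := r₀ + 1 with hR_def
  have hR0 : (0:ℝ) ≤ R := by linarith
  have hr₀R : r₀ < R := by linarith
  have hFrB : F r₀ < F R := F_mono (Set.mem_Ici.mpr hr₀.le) (Set.mem_Ici.mpr hR0) hr₀R
  have hF0B : F 0 < F R := lt_trans hF0r hFrB
  have hB2π : F R < 2 * Real.pi := F_lt_two_pi hR0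
  set S := Set.Icc (F 0) (F R) with hS_def
  have hSsub : S ⊆ Set.Ico (Real.pi - 3) (2 * Real.pi) := by
    intro y hy
    exact ⟨by rw [← F_zero]; exact hy.1, lt_of_le_of_lt hy.2 hB2π⟩
  have hkey : ∀ y ∈ S, F (Finv y) = y := fun y hy => hFinv_right y (hSsub hy)
  have hFcontOn : ContinuousOn F (Set.Icc 0 R) := fun x hx => (F_contAt hx.1).continuousWithinAt
  have hsurj : Set.Icc (F 0) (F R) ⊆ F '' Set.Icc 0 R := intermediate_value_Icc hR0 hFcontOn
  have hmemS : ∀ y ∈ S, Finv y ∈ Set.Icc 0 R := by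
    intro y hy
    obtain ⟨x, hx, hfx⟩ := hsurj hy
    have hxy : Finv y = x := by rw [← hfx, hFinv_left x hx.1]
    rw [hxy]; exact hx
  have hmono : MonotoneOn Finv S := by
    intro y1 h1 y2 h2 h12
    have a1 := hmemS y1 h1
    have a2 := hmemS y2 h2
    apply (F_mono.le_iff_le (Set.mem_Ici.mpr a1.1) (Set.mem_Ici.mpr a2.1)).mp
    rw [hkey y1 h1, hkey y2 h2]; exact h12
  have himg : Set.Icc (0:ℝ) R ⊆ Finv '' S := by
    intro p hp
    refine ⟨F p, ⟨F_mono.monotoneOn (Set.mem_Ici.mpr le_rfl) (Set.mem_Ici.mpr hp.1) hp.1,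
      F_mono.monotoneOn (Set.mem_Ici.mpr hp.1) (Set.mem_Ici.mpr hR0) hp.2⟩,
      hFinv_left p hp.1⟩
  have hcont : ContinuousOn Finv S := by
    intro y hy
    have hy0 := hmemS y hy
    have hleft : ContinuousWithinAt Finv (S ∩ Set.Iic y) y := by
      rcases eq_or_lt_of_le hy.1 with h | h
    
      · have hsing : S ∩ Set.Iic y = {y} := by
          ext z
          simp only [Set.mem_inter_iff, Set.mem_Icc, Set.mem_Iic, Set.mem_singleton_iff, hS_def]
          constructor
          · rintro ⟨⟨hz1, _⟩, hz2⟩; rw [← h] at hz2 ⊢; exact le_antisymm hz2 hz1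
          · rintro rfl; exact ⟨hy, le_rfl⟩
        rw [hsing]
        exact continuousWithinAt_singleton
      · have hq : 0 < Finv y := by
          rcases eq_or_lt_of_le hy0.1 with hq | hq
          · exfalso
            have hk := hkey y hy
            rw [← hq] at hk
            rw [hk] at h
            exact lt_irrefl y h
          · exact hq
        have h1 : S ∈ nhdsWithin y (Set.Iic y) := Icc_mem_nhdsLE_of_mem ⟨h, hy.2⟩
        have h2 : Finv '' S ∈ nhdsWithin (Finv y) (Set.Iic (Finv y)) :=
          Filter.mem_of_superset (Icc_mem_nhdsLE_of_mem ⟨hq, hy0.2⟩) himg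
        exact (continuousWithinAt_left_of_monotoneOn_of_image_mem_nhdsWithin hmono h1 h2).mono
          Set.inter_subset_right
    have hright : ContinuousWithinAt Finv (S ∩ Set.Ici y) y := by
      rcases eq_or_lt_of_le hy.2 with h | h
      · have hsing : S ∩ Set.Ici y = {y} := by
          ext z
          simp only [Set.mem_inter_iff, Set.mem_Icc, Set.mem_Ici, Set.mem_singleton_iff, hS_def]
          constructor
          · rintro ⟨⟨_, hz1⟩, hz2⟩; rw [← h] at hz1; exact le_antisymm hz1 hz2
          · rintro rfl; exact ⟨hy, le_rfl⟩
        rw [hsing]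
        exact continuousWithinAt_singleton
      · have hq : Finv y < R := by
          rcases eq_or_lt_of_le hy0.2 with hq | hq
          · exfalso
            have hk := hkey y hy
            rw [hq] at hk
            rw [← hk] at h
            exact lt_irrefl _ h
          · exact hq
        have h1 : S ∈ nhdsWithin y (Set.Ici y) := Icc_mem_nhdsGE_of_mem ⟨hy.1, h⟩
        have h2 : Finv '' S ∈ nhdsWithin (Finv y) (Set.Ici (Finv y)) :=
          Filter.mem_of_superset (Icc_mem_nhdsGE_of_mem ⟨hy0.1, hq⟩) himg
        exact (continuousWithinAt_right_of_monotoneOn_of_image_mem_nhdsWithin hmono h1 h2).mono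
          Set.inter_subset_right
    refine (hleft.union hright).mono ?_
    intro z hz
    rcases le_total z y with h | h
    · exact Or.inl ⟨hz, h⟩
    · exact Or.inr ⟨hz, h⟩
  have hderivFinv : ∀ y ∈ S, HasDerivWithinAt Finv (Fd (Finv y))⁻¹ S y := fun y hy =>
    hasDerivWithinAt_of_leftInv hy hkey (hcont y hy) (hasDerivAt_F (hmemS y hy).1)
      (Fd_pos (hmemS y hy).1).ne'
  have hUD : UniqueDiffOn ℝ S := uniqueDiffOn_Icc hF0B
  have hFdcont : ContinuousOn Fd (Set.Icc 0 R) := by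
    intro x hx
    have h1x : (0:ℝ) < 1 + x := by linarith [hx.1]
    have hcont1 : Continuous fun x : ℝ => Real.sqrt (1 + 2 * x) * (1 + 3 * x) :=
      (Real.continuous_sqrt.comp (continuous_const.add (continuous_const.mul continuous_id))).mul
        (continuous_const.add (continuous_const.mul continuous_id))
    have hcont2 : Continuous fun x : ℝ => (1 + x) ^ 3 :=
      (continuous_const.add continuous_id).pow 3
    have : ContinuousAt Fd x := by
      unfold Fd
      exact hcont1.continuousAt.div hcont2.continuousAt (by positivity)
    exact this.continuousWithinAt
  have hContInv : ContinuousOn (fun y => (Fd (Finv y))⁻¹) S :=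
    (hFdcont.comp hcont fun y hy => hmemS y hy).inv₀ fun y hy => (Fd_pos (hmemS y hy).1).ne'
  have hFinvC1 : ContDiffOn ℝ 1 Finv S := by
    rw [show (1 : WithTop ℕ∞) = 0 + 1 by norm_num, contDiffOn_succ_iff_derivWithin hUD]
    refine ⟨fun y hy => (hderivFinv y hy).differentiableWithinAt, ?_, ?_⟩
    · intro h; simp at h
    · rw [contDiffOn_zero]
      exact hContInv.congr fun y hy => (hderivFinv y hy).derivWithin (hUD y hy)
  have hyaff : ∀ t : ℝ, HasDerivAt (fun t : ℝ => F r₀ - c * t) (-c) t := by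
    intro t
    simpa using ((hasDerivAt_id t).const_mul c).const_sub (F r₀)
  have hmapsT : Set.MapsTo (fun t => F r₀ - c * t) (Set.Icc 0 T) S := by
    intro t ht
    refine ⟨?_, ?_⟩
    · show F 0 ≤ F r₀ - c * t
      nlinarith [mul_le_mul_of_nonneg_left ht.2 hc.le, hcT]
    · show F r₀ - c * t ≤ F R
      nlinarith [mul_nonneg hc.le ht.1, hFrB]
  have hrfun : r = fun t => Finv (F r₀ - c * t) := funext hr
  have hrC1 : ContDiffOn ℝ 1 r (Set.Icc 0 T) := by
    rw [hrfun]
    exact hFinvC1.comp ((contDiff_const.sub (contDiff_const.mul contDiff_id)).contDiffOn) hmapsT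
  have hr_mem : ∀ t ∈ Set.Icc 0 T, r t ∈ Set.Icc 0 R := by
    intro t ht; rw [hr t]; exact hmemS _ (hmapsT ht)
  have hrkey : ∀ t ∈ Set.Icc 0 T, F (r t) = F r₀ - c * t := by
    intro t ht; rw [hr t]; exact hkey _ (hmapsT ht)
  have hGC1out : ContDiffOn ℝ 1 (fun u => σa ^ 2 * G u / G r₀) (Set.Icc 0 R) := by
    intro u hu
    apply ContDiffAt.contDiffWithinAt
    have h2u : (0:ℝ) < 1 + 2 * u := by linarith [hu.1]
    have h1u : (0:ℝ) < 1 + u := by linarith [hu.1]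
    have hG : ContDiffAt ℝ 1 (fun x : ℝ => x ^ 2 * (1 + 2 * x) ^ ((3:ℝ)/2) / (1 + x) ^ 2) u := by
      apply ContDiffAt.div
      · apply ContDiffAt.mul
        · exact (contDiff_id.pow 2).contDiffAt
        · have hb : ContDiffAt ℝ 1 (fun x : ℝ => x ^ ((3:ℝ)/2)) (1 + 2 * u) :=
            Real.contDiffAt_rpow_const_of_ne (by positivity)
          exact hb.comp u ((contDiff_const.add (contDiff_const.mul contDiff_id)).contDiffAt)
      · exact (ContDiff.pow (contDiff_const.add contDiff_id) 2).contDiffAt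
      · positivity
    have hG' : ContDiffAt ℝ 1 G u := hG
    exact (contDiffAt_const.mul hG').div_const (G r₀)
  have hS1fun : S1 = (fun u => σa ^ 2 * G u / G r₀) ∘ r := funext hS1
  have hS1C1 : ContDiffOn ℝ 1 S1 (Set.Icc 0 T) := by
    rw [hS1fun]
    exact hGC1out.comp hrC1 fun t ht => hr_mem t ht
  have hr0 : r 0 = r₀ := by
    rw [hr 0]
    norm_num
    exact hFinv_left r₀ (Set.mem_Ici.mpr hr₀.le)
  have hrT : r T = 0 := by
    rw [hr T, show F r₀ - c * T = F 0 by linarith [hcT]]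
    exact hFinv_left 0 (Set.mem_Ici.mpr le_rfl)
  have hS10 : S1 0 = σa ^ 2 := by
    rw [hS1 0, hr0]
    field_simp
  have hS1T : S1 T = 0 := by
    rw [hS1 T, hrT, G_zero]
    simp
  have hpos : ∀ t ∈ Set.Ico 0 T, 0 < r t ∧ 0 < S1 t := by
    intro t ht
    have htmem : t ∈ Set.Icc 0 T := ⟨ht.1, ht.2.le⟩
    have hylt : F 0 < F r₀ - c * t := by nlinarith [mul_lt_mul_of_pos_left ht.2 hc, hcT]
    have hrtpos : 0 < r t := by
      rcases eq_or_lt_of_le (hr_mem t htmem).1 with h | h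
      · exfalso
        have hk := hrkey t htmem
        rw [← h] at hk
        linarith
      · exact h
    refine ⟨hrtpos, ?_⟩
    rw [hS1 t]
    have := G_pos hrtpos
    positivity
  refine ⟨hrC1, hS1C1, hr0, hS10, hrT, hS1T, hpos, ?_⟩
  intro t ht
  have htmem : t ∈ Set.Icc 0 T := ⟨ht.1, ht.2.le⟩
  have hylt : F 0 < F r₀ - c * t := by nlinarith [mul_lt_mul_of_pos_left ht.2 hc, hcT]
  have hyle : F r₀ - c * t < F R := by nlinarith [mul_nonneg hc.le ht.1]
  have hySmem : F r₀ - c * t ∈ S := ⟨hylt.le, hyle.le⟩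
  have hSnhds : S ∈ nhds (F r₀ - c * t) := Icc_mem_nhds hylt hyle
  have hFinvD : HasDerivAt Finv (Fd (Finv (F r₀ - c * t)))⁻¹ (F r₀ - c * t) :=
    (hderivFinv _ hySmem).hasDerivAt hSnhds
  have hrD0 : HasDerivAt r ((Fd (r t))⁻¹ * -c) t := by
    have h := hFinvD.comp t (hyaff t)
    rw [← hr t] at h
    have h2 : (Finv ∘ fun t : ℝ => F r₀ - c * t) = r := by
      funext s
      simp only [Function.comp_apply]
      exact (hr s).symm
    rwa [h2] at h
  have hρpos : 0 < r t := (hpos t ht).1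
  have hρR := hr_mem t htmem
  have h2ρ : (0:ℝ) < 1 + 2 * r t := by linarith
  have hsρ : 0 < Real.sqrt (1 + 2 * r t) := Real.sqrt_pos.mpr h2ρ
  have hss : Real.sqrt (1 + 2 * r t) ^ 2 = 1 + 2 * r t := Real.sq_sqrt h2ρ.le
  have hS1t : 0 < S1 t := (hpos t ht).2
  constructor
  · have h_eq : (Fd (r t))⁻¹ * -c =
        -(σw ^ 2 * r t ^ 2 * (1 + r t) * (1 + 2 * r t) / ((1 + 3 * r t) * S1 t)) := by
      rw [hc_def]
      exact alg1 hρpos hσa hGr₀ (hS1 t)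
    rw [h_eq] at hrD0
    exact hrD0
  · have hGd := hasDerivAt_G hρR.1
    have hout : HasDerivAt (fun u => σa ^ 2 * G u / G r₀) (σa ^ 2 * Gd (r t) / G r₀) (r t) :=
      (hGd.const_mul (σa ^ 2)).div_const (G r₀)
    have h := hout.comp t hrD0
    have h2 : ((fun u => σa ^ 2 * G u / G r₀) ∘ r) = S1 := hS1fun.symm
    rw [h2] at h
    have h_eq : σa ^ 2 * Gd (r t) / G r₀ * ((Fd (r t))⁻¹ * -c) =
        -(σw ^ 2 * (r t ^ 2 + 2 * r t)) := by
      rw [hc_def]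
      exact alg2 hρpos hσa hGr₀
    rw [h_eq] at h
    exact h
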